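/- Entry time recursion: let C be a controller for a non-blocking transition system T with C(x) ≠ ∅ for all x, and let J(x) = J(T/C, Y_S, Y_T, x) be the entry time for the reachability specification (Y_S, Y_T). Then for every state x with 0 < J(x) < +∞, J(x) = 1 + max over u ∈ C(x) and x' ∈ S(x,u) of J(x'). -/

import Mathlib

/-- `s, u` is a trajectory of length `N` of the controlled system `T/C`. -/
def IsCtrlTraj {X U : Type*} (S : X → U → Set X) (C : X → Set U)
    (s : ℕ → X) (u : ℕ → U) (N : ℕ) : Prop :=
  ∀ i < N, u i ∈ C (s i) ∧ s (i + 1) ∈ S (s i) (u i)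

/-- The trajectory `s` (of length `N`) meets the reachability specification
`(Y_S, Y_T)`: some index `K ≤ N` has output in `Y_T` with all outputs up to `K`
in `Y_S`. -/
def MeetsSpec {X Y : Type*} (O : X → Y) (Ys Yt : Set Y)
    (s : ℕ → X) (N : ℕ) : Prop :=
  ∃ K ≤ N, (∀ k ≤ K, O (s k) ∈ Ys) ∧ O (s K) ∈ Yt

/-- The entry time `J(T/C, Y_S, Y_T, x)`: the smallest `N` such that every
trajectory of `T/C` of length `N` from `x` meets the specification; `⊤` if none. -/
noncomputable def entryTime {X U Y : Type*} (S : X → U → Set X) (C : X → Set U)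
    (O : X → Y) (Ys Yt : Set Y) (x : X) : ℕ∞ :=
  sInf {N : ℕ∞ | ∃ m : ℕ, N = (m : ℕ∞) ∧
    ∀ s u, s 0 = x → IsCtrlTraj S C s u m → MeetsSpec O Ys Yt s m}

section Aux

variable {X U Y : Type*} {S : X → U → Set X} {C : X → Set U} {O : X → Y} {Ys Yt : Set Y}

/-- every controlled trajectory of length `m` from `x` meets the spec. -/
def ETPred (S : X → U → Set X) (C : X → Set U) (O : X → Y) (Ys Yt : Set Y)
    (m : ℕ) (x : X) : Prop :=
  ∀ s u, s 0 = x → IsCtrlTraj S C s u m → MeetsSpec O Ys Yt s m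

lemma etpred_mono {m n : ℕ} (h : m ≤ n) {x : X} (hp : ETPred S C O Ys Yt m x) :
    ETPred S C O Ys Yt n x := by
  induction n with
  | zero => exact (Nat.le_zero.mp h) ▸ hp
  | succ n ih =>
    rcases Nat.lt_succ_iff_lt_or_eq.mp (Nat.lt_succ_of_le h) with h' | h'
    · have hn := ih (by omega)
      intro s u hs0 ht
      have ht' : IsCtrlTraj S C s u n := fun i hi => ht i (by omega)
      obtain ⟨K, hK, h1, h2⟩ := hn s u hs0 ht'
      exact ⟨K, by omega, h1, h2⟩
    · exact h' ▸ hp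

lemma entryTime_le_iff {x : X} {m : ℕ} :
    entryTime S C O Ys Yt x ≤ (m : ℕ∞) ↔ ETPred S C O Ys Yt m x := by
  constructor
  · intro h
    by_contra hP
    have h1 : ((m + 1 : ℕ) : ℕ∞) ≤ entryTime S C O Ys Yt x := by
      apply le_sInf
      rintro b ⟨n, rfl, hn⟩
      have hmn : m + 1 ≤ n := by
        by_contra hc
        exact hP (etpred_mono (by omega) hn)
      exact_mod_cast hmn
    have h2 : ((m + 1 : ℕ) : ℕ∞) ≤ (m : ℕ∞) := h1.trans h
    have : m + 1 ≤ m := by exact_mod_cast h2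
    omega
  · intro h
    exact sInf_le ⟨m, rfl, h⟩

/-- key forward step -/
lemma etpred_step {x : X} {m : ℕ} (hYts : Yt ⊆ Ys) (hYt : O x ∉ Yt)
    (hp : ETPred S C O Ys Yt (m + 1) x) :
    ∀ u ∈ C x, ∀ x' ∈ S x u, ETPred S C O Ys Yt m x' := by
  intro u hu x' hx' s w hs0 htraj
  set s' : ℕ → X := fun n => match n with | 0 => x | (i+1) => s i with hs'
  set w' : ℕ → U := fun n => match n with | 0 => u | (i+1) => w i with hw'
  have htraj' : IsCtrlTraj S C s' w' (m + 1) := by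
    intro i hi
    match i with
    | 0 => exact ⟨hu, by simpa [hs', hw', hs0] using hx'⟩
    | (j+1) => exact htraj j (by omega)
  obtain ⟨K, hK, h1, h2⟩ := hp s' w' rfl htraj'
  match K with
  | 0 => exact absurd h2 hYt
  | (K'+1) =>
    exact ⟨K', by omega, fun k hk => h1 (k+1) (by omega), h2⟩

/-- key backward step -/
lemma etpred_back {x : X} {m : ℕ} (hYs : O x ∈ Ys)
    (hp : ¬ ETPred S C O Ys Yt (m + 1) x) :
    ∃ u ∈ C x, ∃ x' ∈ S x u, ¬ ETPred S C O Ys Yt m x' := by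
  simp only [ETPred, not_forall] at hp
  obtain ⟨s, w, hs0, htraj, hmeet⟩ := hp
  have h0 := htraj 0 (by omega)
  refine ⟨w 0, hs0 ▸ h0.1, s 1, hs0 ▸ h0.2, ?_⟩
  intro hP
  have htraj' : IsCtrlTraj S C (fun i => s (i+1)) (fun i => w (i+1)) m :=
    fun i hi => htraj (i+1) (by omega)
  obtain ⟨K, hK, h1, h2⟩ := hP _ _ rfl htraj'
  refine hmeet ⟨K + 1, by omega, ?_, h2⟩
  intro k hk
  match k with
  | 0 => exact hs0 ▸ hYs
  | (j+1) => exact h1 j (by omega)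

end Aux

/-- entry time recursion: for a controller `C` (nonempty everywhere,
enabling only feasible inputs) on a non-blocking system, if `0 < J(x) < ∞` then
`J(x) = 1 + max_{u ∈ C(x), x' ∈ S(x,u)} J(x')`. -/
theorem entryTime_recursion {X U Y : Type*}
    (S : X → U → Set X) (C : X → Set U) (O : X → Y) (Ys Yt : Set Y)
    (hYts : Yt ⊆ Ys)
    (hnb : ∀ x, ∃ u, (S x u).Nonempty)
    (hCE : ∀ x, ∀ u ∈ C x, (S x u).Nonempty)
    (hCne : ∀ x, (C x).Nonempty)
    (x : X) (hpos : 0 < entryTime S C O Ys Yt x)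
    (hfin : entryTime S C O Ys Yt x < ⊤) :
    entryTime S C O Ys Yt x =
      1 + ⨆ u ∈ C x, ⨆ x' ∈ S x u, entryTime S C O Ys Yt x' := by
  classical
  -- the entry time is a finite natural number n, so ETPred n x holds
  obtain ⟨n, hn⟩ : ∃ n : ℕ, entryTime S C O Ys Yt x = (n : ℕ∞) := by
    lift entryTime S C O Ys Yt x to ℕ using hfin.ne with n hn
    exact ⟨n, rfl⟩
  have hPn : ETPred S C O Ys Yt n x := entryTime_le_iff.mp hn.le
  have hex : ∃ k, ETPred S C O Ys Yt k x := ⟨n, hPn⟩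
  set m₀ := Nat.find hex with hm₀
  have hJm₀ : entryTime S C O Ys Yt x = (m₀ : ℕ∞) := by
    refine le_antisymm (entryTime_le_iff.mpr (Nat.find_spec hex)) ?_
    rw [hn]
    exact_mod_cast Nat.find_min' hex hPn
  have hm₀pos : 0 < m₀ := by
    by_contra h
    rw [hJm₀, Nat.eq_zero_of_not_pos h] at hpos
    simp at hpos
  obtain ⟨m, hm⟩ : ∃ m, m₀ = m + 1 := ⟨m₀ - 1, by omega⟩
  have hPm1 : ETPred S C O Ys Yt (m + 1) x := hm ▸ Nat.find_spec hex
  have hnPm : ¬ ETPred S C O Ys Yt m x := Nat.find_min hex (by omega)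
  have hnP0 : ¬ ETPred S C O Ys Yt 0 x := Nat.find_min hex (by omega)
  -- O x ∉ Yt
  have hYt : O x ∉ Yt := by
    intro hmem
    apply hnP0
    intro s u hs0 _
    exact ⟨0, le_refl 0, fun k hk => by
      rw [Nat.le_zero.mp hk, hs0]; exact hYts hmem, hs0 ▸ hmem⟩
  -- a canonical infinite trajectory, to show O x ∈ Ys
  have hYs : O x ∈ Ys := by
    classical
    set step : X → X := fun y => (hCE y (hCne y).choose (hCne y).choose_spec).choose
    set f : ℕ → X := fun k => step^[k] x with hf
    set uu : ℕ → U := fun i => (hCne (f i)).choose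
    have htraj : IsCtrlTraj S C f uu (m + 1) := by
      intro i _
      refine ⟨(hCne (f i)).choose_spec, ?_⟩
      have : f (i + 1) = step (f i) := by
        simp only [hf, Function.iterate_succ_apply']
      rw [this]
      exact (hCE (f i) (hCne (f i)).choose (hCne (f i)).choose_spec).choose_spec
    obtain ⟨K, hK, h1, h2⟩ := hPm1 f uu (by simp [hf]) htraj
    have := h1 0 (by omega)
    simpa [hf] using this
  -- the supremum equals m
  have hsup : (⨆ u ∈ C x, ⨆ x' ∈ S x u, entryTime S C O Ys Yt x') = (m : ℕ∞) := by
    apply le_antisymm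
    · apply iSup₂_le
      intro u hu
      apply iSup₂_le
      intro x' hx'
      exact entryTime_le_iff.mpr (etpred_step hYts hYt hPm1 u hu x' hx')
    · match m with
      | 0 => exact zero_le
      | (k+1) =>
        obtain ⟨u, hu, x', hx', hnP⟩ := etpred_back hYs hnPm
        have hlt : (k : ℕ∞) < entryTime S C O Ys Yt x' := by
          by_contra hc
          exact hnP (entryTime_le_iff.mp (not_lt.mp hc))
        have h1 : ((k+1 : ℕ) : ℕ∞) ≤ entryTime S C O Ys Yt x' := by
          rw [Nat.cast_add, Nat.cast_one]
          exact Order.add_one_le_of_lt hlt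
        refine h1.trans ?_
        calc entryTime S C O Ys Yt x'
            ≤ ⨆ x' ∈ S x u, entryTime S C O Ys Yt x' :=
              le_iSup₂ (f := fun x' (_ : x' ∈ S x u) => entryTime S C O Ys Yt x') x' hx'
          _ ≤ ⨆ u ∈ C x, ⨆ x' ∈ S x u, entryTime S C O Ys Yt x' :=
              le_iSup₂ (f := fun u (_ : u ∈ C x) => ⨆ x' ∈ S x u, entryTime S C O Ys Yt x') u hu
  rw [hJm₀, hsup, hm]
  rw [Nat.cast_add, Nat.cast_one, add_comm]
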